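/- arXiv:1412.3259 — 4 statements merged into one kernel-verified Lean document; each statement's English description precedes it below -/
import Mathlib

section
/- Let X be a compact Hausdorff topological space with a continuous right action of B. Suppose (i) every B-orbit in X is dense, and (ii) there exists u ∈ X whose horocycle orbit {h_s(u) : s ∈ ℝ} is dense in X. Let M be a minimal set for the horocycle flow on X, and assume there exists a real number t₀ > 0 with g_{t₀}(M) = M. Then M = X. (This is the paper's Proposition stated in the setting in which its proof takes place: a compact space with a continuous right B-action; in the paper X is the unit tangent bundle of a minimal compact lamination by hyperbolic surfaces.) -/
open Matrix Real
open scoped MatrixGroups UpperHalfPlane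

/-- The diagonal matrix `d(t)` generating the geodesic flow. -/
noncomputable def dMat (t : ℝ) : SL(2, ℝ) :=
  ⟨!![Real.exp (t / 2), 0; 0, Real.exp (-(t / 2))], by
    simp [Matrix.det_fin_two_of, ← Real.exp_add]⟩

/-- The unipotent matrix `u(s)` generating the horocycle flow. -/
noncomputable def uMat (s : ℝ) : SL(2, ℝ) :=
  ⟨!![1, s; 0, 1], by simp [Matrix.det_fin_two_of]⟩

/-- The upper-triangular subgroup `B` of `SL(2,ℝ)` with positive diagonal. -/
def Bsub : Subgroup SL(2, ℝ) where
  carrier := {g | g.1 1 0 = 0 ∧ 0 < g.1 0 0}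
  one_mem' := by norm_num
  mul_mem' := by
    rintro a b ⟨ha0, ha1⟩ ⟨hb0, hb1⟩
    constructor
    · show (a * b).1 1 0 = 0
      rw [Matrix.SpecialLinearGroup.coe_mul, Matrix.mul_apply, Fin.sum_univ_two, ha0, hb0]
      ring
    · show 0 < (a * b).1 0 0
      rw [Matrix.SpecialLinearGroup.coe_mul, Matrix.mul_apply, Fin.sum_univ_two, hb0]
      simpa using mul_pos ha1 hb1
  inv_mem' := by
    rintro a ⟨ha0, ha1⟩
    have hdet := a.2
    rw [Matrix.det_fin_two, ha0] at hdet
    constructor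
    · show (a⁻¹).1 1 0 = 0
      rw [Matrix.SpecialLinearGroup.SL2_inv_expl]
      simp [ha0]
    · show 0 < (a⁻¹).1 0 0
      rw [Matrix.SpecialLinearGroup.SL2_inv_expl]
      simp only [Matrix.SpecialLinearGroup.coe_mk]
      show 0 < a.1 1 1
      nlinarith

theorem dMat_mem_B (t : ℝ) : dMat t ∈ Bsub := by
  constructor
  · show (dMat t).1 1 0 = 0
    simp [dMat]
  · show 0 < (dMat t).1 0 0
    simp [dMat, Real.exp_pos]

theorem uMat_mem_B (s : ℝ) : uMat s ∈ Bsub := by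
  constructor
  · show (uMat s).1 1 0 = 0
    simp [uMat]
  · show 0 < (uMat s).1 0 0
    simp [uMat]

/-- The matrix topology on `SL(2,ℝ)`, induced from the space of matrices. -/
instance : TopologicalSpace SL(2, ℝ) :=
  TopologicalSpace.induced (fun g => (g : Matrix (Fin 2) (Fin 2) ℝ)) inferInstance

/-- `d(t)` as an element of the subgroup `B`. -/
noncomputable def dB (t : ℝ) : Bsub := ⟨dMat t, dMat_mem_B t⟩

/-- `u(s)` as an element of the subgroup `B`. -/
noncomputable def uB (s : ℝ) : Bsub := ⟨uMat s, uMat_mem_B s⟩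

section

variable {X : Type*} [TopologicalSpace X]

/-- `M` is a minimal set for the horocycle flow: nonempty, closed, invariant under the
horocycle flow, and properly containing no nonempty closed invariant subset. -/
def IsMinimalHoro (act : X → Bsub → X) (M : Set X) : Prop :=
  M.Nonempty ∧ IsClosed M ∧ (∀ s : ℝ, (fun x => act x (uB s)) '' M = M) ∧
    ∀ M' : Set X, M' ⊆ M → M'.Nonempty → IsClosed M' →
      (∀ s : ℝ, (fun x => act x (uB s)) '' M' = M') → M' = M

end


lemma dMat_mul (t t' : ℝ) : dMat t * dMat t' = dMat (t + t') := by
  ext i j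
  rw [Matrix.SpecialLinearGroup.coe_mul]
  fin_cases i <;> fin_cases j <;>
    simp [dMat, Matrix.mul_apply, Fin.sum_univ_two, ← Real.exp_add] <;> ring_nf

lemma uMat_dMat (s t : ℝ) : uMat s * dMat t = dMat t * uMat (s * Real.exp (-t)) := by
  ext i j
  rw [Matrix.SpecialLinearGroup.coe_mul, Matrix.SpecialLinearGroup.coe_mul]
  fin_cases i <;> fin_cases j <;>
    simp [uMat, dMat, Matrix.mul_apply, Fin.sum_univ_two]
  have h : Real.exp (t/2) * Real.exp (-t) = Real.exp (-(t/2)) := by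
    rw [← Real.exp_add]; ring_nf
  rw [← h]; ring

lemma SL2_decomp (g : SL(2,ℝ)) (h10 : g.1 1 0 = 0) (h00 : 0 < g.1 0 0) :
    g = uMat (g.1 0 0 * g.1 0 1) * dMat (2 * Real.log (g.1 0 0)) := by
  have hdet := g.2
  rw [Matrix.det_fin_two, h10] at hdet
  ext i j
  rw [Matrix.SpecialLinearGroup.coe_mul]
  fin_cases i <;> fin_cases j <;>
    simp [uMat, dMat, Matrix.mul_apply, Fin.sum_univ_two, h10]
  · exact (Real.exp_log h00).symm
  · rw [Real.exp_neg, Real.exp_log h00]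
    field_simp
  · rw [Real.exp_neg, Real.exp_log h00]
    field_simp
    linear_combination hdet

lemma dB_mul (t t' : ℝ) : dB t * dB t' = dB (t + t') := by
  apply Subtype.ext
  show dMat t * dMat t' = dMat (t + t')
  exact dMat_mul t t'

lemma uB_dB (s t : ℝ) : uB s * dB t = dB t * uB (s * Real.exp (-t)) := by
  apply Subtype.ext
  show uMat s * dMat t = dMat t * uMat (s * Real.exp (-t))
  exact uMat_dMat s t

lemma dB_uB (t s : ℝ) : dB t * uB s = uB (s * Real.exp t) * dB t := by
  rw [uB_dB]
  congr 1
  rw [mul_assoc, ← Real.exp_add]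
  simp

lemma dB_zero : dB 0 = 1 := by
  apply Subtype.ext
  apply Subtype.ext
  show (dMat 0).1 = (1 : SL(2,ℝ)).1
  simp [dMat, Matrix.SpecialLinearGroup.coe_one, Matrix.one_fin_two]

lemma B_decomp (b : Bsub) : ∃ s t : ℝ, b = uB s * dB t := by
  obtain ⟨h10, h00⟩ := b.2
  refine ⟨b.1.1 0 0 * b.1.1 0 1, 2 * Real.log (b.1.1 0 0), ?_⟩
  apply Subtype.ext
  show b.1 = uMat _ * dMat _
  exact SL2_decomp b.1 h10 h00

lemma dB_continuous : Continuous dB := by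
  apply Continuous.subtype_mk
  apply Continuous.subtype_mk
  refine continuous_matrix fun i j => ?_
  fin_cases i <;> fin_cases j <;> simp <;> fun_prop
/-- Let `X` be a compact Hausdorff space with a continuous right action of `B`.
If every `B`-orbit is dense, some point has a dense horocycle orbit, and `M` is a minimal set of
the horocycle flow which is invariant under `g_{t₀}` for some `t₀ > 0`, then `M = X`. -/
theorem minimal_set_fixed_by_geodesic_time_eq_univ
    {X : Type*} [TopologicalSpace X] [CompactSpace X] [T2Space X]
    (act : X → Bsub → X)
    (act_one : ∀ x : X, act x 1 = x)
    (act_mul : ∀ (x : X) (g h : Bsub), act (act x g) h = act x (g * h))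
    (act_cont : Continuous fun p : X × Bsub => act p.1 p.2)
    (hBdense : ∀ x : X, Dense (Set.range (act x)))
    (htrans : ∃ u : X, Dense (Set.range fun s : ℝ => act u (uB s)))
    (M : Set X) (hM : IsMinimalHoro act M)
    (t₀ : ℝ) (ht₀ : 0 < t₀)
    (hfix : (fun x => act x (dB t₀)) '' M = M) :
    M = Set.univ := by
  obtain ⟨hMne, hMcl, hMU, -⟩ := hM
  obtain ⟨u, hu⟩ := htrans
  have hgcont : ∀ t : ℝ, Continuous (fun x => act x (dB t)) := fun t =>
    act_cont.comp (continuous_id.prodMk continuous_const)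
  have hMcompact : IsCompact M := hMcl.isCompact
  have hcomp : ∀ (x : X) (t t' : ℝ),
      act (act x (dB t)) (dB t') = act x (dB (t + t')) := by
    intro x t t'; rw [act_mul, dB_mul]
  -- g_t(M) is U-invariant
  have hgU : ∀ (t s : ℝ) (x : X), x ∈ M →
      act (act x (dB t)) (uB s) ∈ (fun y => act y (dB t)) '' M := by
    intro t s x hx
    rw [act_mul, dB_uB, ← act_mul]
    have : act x (uB (s * Real.exp t)) ∈ M := by
      rw [← hMU (s * Real.exp t)]; exact ⟨x, hx, rfl⟩
    exact ⟨_, this, rfl⟩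
  -- g_{n t₀}(M) = M for all integers n
  have hneg : (fun x => act x (dB (-t₀))) '' M = M := by
    conv_lhs => rw [← hfix]
    rw [← Set.image_comp]
    have : ((fun x => act x (dB (-t₀))) ∘ fun x => act x (dB t₀)) = id := by
      funext x
      simp only [Function.comp, id_eq, hcomp, add_neg_cancel, dB_zero, act_one]
    rw [this, Set.image_id]
  have hZ : ∀ n : ℤ, (fun x => act x (dB (n * t₀))) '' M = M := by
    intro n
    induction n using Int.induction_on with
    | zero => simp only [Int.cast_zero, zero_mul, dB_zero, act_one, Set.image_id']
    | succ n ih =>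
      have : (fun x => act x (dB ((((n : ℤ) + 1 : ℤ) : ℝ) * t₀)))
          = (fun x => act x (dB t₀)) ∘ (fun x => act x (dB ((n : ℝ) * t₀))) := by
        funext x
        simp only [Function.comp, hcomp]
        norm_num
        ring_nf
      rw [this, Set.image_comp]
      push_cast at ih ⊢
      rw [ih, hfix]
    | pred n ih =>
      have : (fun x => act x (dB (((-(n : ℤ) - 1 : ℤ) : ℝ) * t₀)))
          = (fun x => act x (dB (-t₀))) ∘ (fun x => act x (dB ((-(n : ℤ) : ℝ) * t₀))) := by
        funext x
        simp only [Function.comp, hcomp]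
        norm_num
        ring_nf
      rw [this, Set.image_comp]
      push_cast at ih ⊢
      rw [ih, hneg]
  -- reduce arbitrary t to [0, t₀]
  have hred : ∀ t : ℝ, ∃ t' ∈ Set.Icc (0:ℝ) t₀,
      (fun x => act x (dB t)) '' M = (fun x => act x (dB t')) '' M := by
    intro t
    refine ⟨t - ⌊t / t₀⌋ * t₀, ⟨Int.sub_floor_div_mul_nonneg t ht₀,
      le_of_lt (Int.sub_floor_div_mul_lt t ht₀)⟩, ?_⟩
    have : (fun x => act x (dB t))
        = (fun x => act x (dB (t - ⌊t / t₀⌋ * t₀))) ∘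
          (fun x => act x (dB ((⌊t / t₀⌋ : ℝ) * t₀))) := by
      funext x
      simp only [Function.comp, hcomp]
      ring_nf
    rw [this, Set.image_comp, hZ]
  -- the union Y of g_t(M), t ∈ [0,t₀], is compact, closed, and equals univ
  set Y : Set X := (fun p : ℝ × X => act p.2 (dB p.1)) '' (Set.Icc (0:ℝ) t₀ ×ˢ M)
    with hYdef
  have hYcomp : IsCompact Y :=
    (isCompact_Icc.prod hMcompact).image
      (act_cont.comp (continuous_snd.prodMk (dB_continuous.comp continuous_fst)))
  have hmem : ∀ (t : ℝ) (x : X), x ∈ M → act x (dB t) ∈ Y := by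
    intro t x hx
    obtain ⟨t', ht', heq⟩ := hred t
    have : act x (dB t) ∈ (fun y => act y (dB t')) '' M := by
      rw [← heq]; exact ⟨x, hx, rfl⟩
    obtain ⟨m, hm, hm2⟩ := this
    exact ⟨(t', m), ⟨ht', hm⟩, hm2⟩
  obtain ⟨x0, hx0⟩ := hMne
  have hYuniv : Y = Set.univ := by
    have hsub : Set.range (act x0) ⊆ Y := by
      rintro _ ⟨b, rfl⟩
      obtain ⟨s, t, rfl⟩ := B_decomp b
      rw [← act_mul]
      have hus : act x0 (uB s) ∈ M := by
        rw [← hMU s]; exact ⟨x0, hx0, rfl⟩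
      exact hmem t _ hus
    have : Dense Y := (hBdense x0).mono hsub
    rw [← hYcomp.isClosed.closure_eq, this.closure_eq]
  -- u lies in some g_τ(M); the U-orbit of u is inside g_τ(M), so g_τ(M) = univ
  obtain ⟨⟨τ, z⟩, ⟨hτ, hz⟩, rfl⟩ : ∃ p ∈ Set.Icc (0:ℝ) t₀ ×ˢ M, act p.2 (dB p.1) = u := by
    have : u ∈ Y := hYuniv ▸ Set.mem_univ u
    exact this
  have hτM : (fun y => act y (dB τ)) '' M = Set.univ := by
    have hclosed : IsClosed ((fun y => act y (dB τ)) '' M) :=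
      (hMcompact.image (hgcont τ)).isClosed
    have hsub : Set.range (fun s : ℝ => act (act z (dB τ)) (uB s))
        ⊆ (fun y => act y (dB τ)) '' M := by
      rintro _ ⟨s, rfl⟩
      exact hgU τ s z hz
    have : Dense ((fun y => act y (dB τ)) '' M) := hu.mono hsub
    rw [← hclosed.closure_eq, this.closure_eq]
  -- conclude M = univ by injectivity of g_τ
  apply Set.eq_univ_of_forall
  intro x
  have : act x (dB τ) ∈ (fun y => act y (dB τ)) '' M := hτM ▸ Set.mem_univ _
  obtain ⟨m, hm, hm2⟩ := this
  have : m = x := by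
    have h1 : act (act m (dB τ)) (dB (-τ)) = m := by
      rw [hcomp, add_neg_cancel, dB_zero, act_one]
    have h2 : act (act x (dB τ)) (dB (-τ)) = x := by
      rw [hcomp, add_neg_cancel, dB_zero, act_one]
    have hm2' : act m (dB τ) = act x (dB τ) := hm2
    rw [← h1, hm2', h2]
  rwa [← this]
end

section
/- Let X be a compact Hausdorff topological space with a continuous right action of B, and let M be a minimal set for the horocycle flow on X. Then the set C = {t ∈ ℝ : g_t(M) = M} coincides with the set {t ∈ ℝ : g_t(M) ∩ M ≠ ∅}, and C is a closed additive subgroup of ℝ. -/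
open Matrix Real
open scoped MatrixGroups UpperHalfPlane

lemma dMat_add (t t' : ℝ) : dMat (t + t') = dMat t * dMat t' := by
  ext i j
  rw [Matrix.SpecialLinearGroup.coe_mul]
  fin_cases i <;> fin_cases j <;>
    simp [dMat, Matrix.mul_apply, Fin.sum_univ_two, ← Real.exp_add] <;> ring_nf

lemma dMat_zero : dMat 0 = 1 := by
  ext i j
  fin_cases i <;> fin_cases j <;> simp [dMat]

lemma dMat_uMat (t s : ℝ) : dMat t * uMat s = uMat (s * Real.exp t) * dMat t := by
  ext i j
  rw [Matrix.SpecialLinearGroup.coe_mul, Matrix.SpecialLinearGroup.coe_mul]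
  fin_cases i <;> fin_cases j <;>
    simp [dMat, uMat, Matrix.mul_apply, Fin.sum_univ_two]
  rw [mul_assoc, ← Real.exp_add]
  have h : t + -(t / 2) = t / 2 := by ring
  rw [h, mul_comm]

lemma uMat_add (s s' : ℝ) : uMat (s + s') = uMat s * uMat s' := by
  ext i j
  rw [Matrix.SpecialLinearGroup.coe_mul]
  fin_cases i <;> fin_cases j <;>
    simp [uMat, Matrix.mul_apply, Fin.sum_univ_two] <;> ring

lemma uMat_zero : uMat 0 = 1 := by
  ext i j
  fin_cases i <;> fin_cases j <;> simp [uMat]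

lemma continuous_dMat : Continuous dMat := by
  apply continuous_induced_rng.2
  apply continuous_matrix
  intro i j
  fin_cases i <;> fin_cases j <;> simp [dMat] <;> fun_prop

lemma dB_add (t t' : ℝ) : dB (t + t') = dB t * dB t' := Subtype.ext (dMat_add t t')

lemma uB_add (s s' : ℝ) : uB (s + s') = uB s * uB s' := Subtype.ext (uMat_add s s')

lemma uB_zero : uB 0 = 1 := Subtype.ext uMat_zero

lemma continuous_dB : Continuous (fun t => (dB t : Bsub)) :=
  Continuous.subtype_mk continuous_dMat dMat_mem_B

/-- Let `X` be a compact Hausdorff space with a continuous right action of `B`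
and let `M` be a minimal set for the horocycle flow. Then
`C = {t : g_t(M) = M}` coincides with `{t : g_t(M) ∩ M ≠ ∅}`, and `C` is a closed additive
subgroup of `ℝ`. -/
theorem stabilizer_times_of_minimal_set
    {X : Type*} [TopologicalSpace X] [CompactSpace X] [T2Space X]
    (act : X → Bsub → X)
    (act_one : ∀ x : X, act x 1 = x)
    (act_mul : ∀ (x : X) (g h : Bsub), act (act x g) h = act x (g * h))
    (act_cont : Continuous fun p : X × Bsub => act p.1 p.2)
    (M : Set X) (hM : IsMinimalHoro act M) :
    {t : ℝ | (fun x => act x (dB t)) '' M = M} =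
      {t : ℝ | ((fun x => act x (dB t)) '' M ∩ M).Nonempty} ∧
    ∃ C : AddSubgroup ℝ, (C : Set ℝ) = {t : ℝ | (fun x => act x (dB t)) '' M = M} ∧
      IsClosed (C : Set ℝ)  := by
  obtain ⟨hne, hcl, hinv, hmin⟩ := hM
  have actg_cont : ∀ g : Bsub, Continuous fun x : X => act x g := fun g =>
    act_cont.comp (continuous_id.prodMk continuous_const)
  have img_comp : ∀ (g h : Bsub) (A : Set X),
      (fun x => act x h) '' ((fun x => act x g) '' A) = (fun x => act x (g * h)) '' A := by
    intro g h A
    rw [Set.image_image]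
    simp only [act_mul]
  have img_one : ∀ A : Set X, (fun x => act x (1 : Bsub)) '' A = A := by
    intro A
    have h1 : (fun x : X => act x (1 : Bsub)) = id := funext act_one
    rw [h1, Set.image_id]
  have hinj : ∀ s : ℝ, Function.Injective fun x : X => act x (uB s) := by
    intro s x y h
    have h2 := congrArg (fun z => act z (uB (-s))) h
    simpa only [act_mul, ← uB_add, add_neg_cancel, uB_zero, act_one] using h2
  have himgcl : ∀ (g : Bsub) (A : Set X), IsClosed A → IsClosed ((fun x => act x g) '' A) :=
    fun g A hA => (hA.isCompact.image (actg_cont g)).isClosed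
  have hUinv_img : ∀ (t : ℝ) (A : Set X), (∀ s, (fun x => act x (uB s)) '' A = A) →
      ∀ s, (fun x => act x (uB s)) '' ((fun x => act x (dB t)) '' A) =
        (fun x => act x (dB t)) '' A := by
    intro t A hA s
    rw [img_comp, dB_uB, ← img_comp, hA]
  have key : ∀ t : ℝ, ((fun x => act x (dB t)) '' M ∩ M).Nonempty →
      (fun x => act x (dB t)) '' M = M := by
    intro t hne'
    have hsub : (fun x => act x (dB t)) '' M ∩ M = M := by
      apply hmin _ Set.inter_subset_right hne' ((himgcl _ _ hcl).inter hcl)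
      intro s
      rw [Set.image_inter (hinj s), hUinv_img t M hinv s, hinv s]
    have hMsub : M ⊆ (fun x => act x (dB t)) '' M := by
      conv_lhs => rw [← hsub]
      exact Set.inter_subset_left
    have h2 : (fun x => act x (dB (-t))) '' M ⊆ M := by
      have h3 := Set.image_mono (f := fun x => act x (dB (-t))) hMsub
      rwa [img_comp, ← dB_add, add_neg_cancel, dB_zero, img_one] at h3
    have h4 : (fun x => act x (dB (-t))) '' M = M :=
      hmin _ h2 (hne.image _) (himgcl _ _ hcl) (hUinv_img (-t) M hinv)
    calc (fun x => act x (dB t)) '' M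
        = (fun x => act x (dB t)) '' ((fun x => act x (dB (-t))) '' M) := by rw [h4]
      _ = M := by rw [img_comp, ← dB_add, neg_add_cancel, dB_zero, img_one]
  have hseteq : {t : ℝ | (fun x => act x (dB t)) '' M = M} =
      {t : ℝ | ((fun x => act x (dB t)) '' M ∩ M).Nonempty} := by
    ext t
    simp only [Set.mem_setOf_eq]
    constructor
    · intro h; rw [h, Set.inter_self]; exact hne
    · exact key t
  let C : AddSubgroup ℝ :=
    { carrier := {t : ℝ | (fun x => act x (dB t)) '' M = M}
      zero_mem' := by
        simp only [Set.mem_setOf_eq]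
        rw [dB_zero, img_one]
      add_mem' := by
        intro a b ha hb
        simp only [Set.mem_setOf_eq] at ha hb ⊢
        rw [dB_add, ← img_comp, ha, hb]
      neg_mem' := by
        intro a ha
        simp only [Set.mem_setOf_eq] at ha ⊢
        calc (fun x => act x (dB (-a))) '' M
            = (fun x => act x (dB (-a))) '' ((fun x => act x (dB a)) '' M) := by rw [ha]
          _ = M := by rw [img_comp, ← dB_add, add_neg_cancel, dB_zero, img_one] }
  refine ⟨hseteq, C, rfl, ?_⟩
  obtain ⟨x0, hx0⟩ := hne
  have hpre : {t : ℝ | (fun x => act x (dB t)) '' M = M} = (fun t => act x0 (dB t)) ⁻¹' M := by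
    ext t
    simp only [Set.mem_setOf_eq, Set.mem_preimage]
    constructor
    · intro h
      rw [← h]
      exact ⟨x0, hx0, rfl⟩
    · intro h
      exact key t ⟨act x0 (dB t), ⟨x0, hx0, rfl⟩, h⟩
  show IsClosed {t : ℝ | (fun x => act x (dB t)) '' M = M}
  rw [hpre]
  exact hcl.preimage (act_cont.comp (continuous_const.prodMk continuous_dB))
end

section
/- Let γ ∈ SL(2,ℝ), let b ≥ 0 and t ≥ 0, and let p ∈ ℍ be the point with Re p = 0 and Im p = exp(t). If dist(p, γ·p) ≤ b, then −log(Im(γ⁻¹·i)) ≤ b. -/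
open Matrix Real
open scoped MatrixGroups UpperHalfPlane

/-- The element `-1` of `SL(2,ℝ)`. -/
def negOne : SL(2, ℝ) := ⟨!![-1, 0; 0, -1], by norm_num [Matrix.det_fin_two_of]⟩

/-- The translation length `ℓ(γ) = inf {dist(z, γ·z) : z ∈ ℍ}`. -/
noncomputable def transLen (γ : SL(2, ℝ)) : ℝ := ⨅ z : ℍ, dist z (γ • z)

/-- The set `{γ·g₀·u(s) : γ ∈ Γ, s ∈ ℝ}`, i.e. the lift to `SL(2,ℝ)` of the horocycle
orbit of the point `Γg₀` of `Γ\SL(2,ℝ)`. -/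
def horoSat (Γ : Subgroup SL(2, ℝ)) (g₀ : SL(2, ℝ)) : Set SL(2, ℝ) :=
  {x | ∃ γ ∈ Γ, ∃ s : ℝ, x = γ * g₀ * uMat s}

/-- The geodesic ray determined by `g`: `r_g(t) = (g·d(t))·i ∈ ℍ`. -/
noncomputable def ray (g : SL(2, ℝ)) (t : ℝ) : ℍ := (g * dMat t) • UpperHalfPlane.I

/-- `Γ` has bounded geometry below `a`: every nontrivial element of `Γ` moves every point
of `ℍ` at distance at least `a`. -/
def BoundedGeomBelow (Γ : Subgroup SL(2, ℝ)) (a : ℝ) : Prop :=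
  ∀ (z : ℍ) (γ : SL(2, ℝ)), γ ∈ Γ → γ ≠ 1 → γ ≠ negOne → a ≤ dist z (γ • z)

/-- The quotient surface `Γ\ℍ` is coarsely tame: it is noncompact and there is `b > 0`
such that every geodesic ray either stays in a compact region of the quotient or meets
closed geodesics of length at most `b` at arbitrarily large times. -/
def CoarselyTame (Γ : Subgroup SL(2, ℝ)) : Prop :=
  (¬ ∃ K : Set ℍ, IsCompact K ∧ ∀ z : ℍ, ∃ γ ∈ Γ, γ • z ∈ K) ∧
    ∃ b > 0, ∀ g : SL(2, ℝ),
      (∃ K : Set ℍ, IsCompact K ∧ ∀ t ≥ (0 : ℝ), ∃ γ ∈ Γ, γ • ray g t ∈ K) ∨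
      (∀ T : ℝ, ∃ t ≥ T, ∃ γ ∈ Γ, γ ≠ 1 ∧ γ ≠ negOne ∧
        dist (ray g t) (γ • ray g t) = transLen γ ∧ transLen γ ≤ b)

set_option synthInstance.maxHeartbeats 400000
set_option maxHeartbeats 1000000

lemma im_smul_SL' (g : SL(2,ℝ)) (z : ℍ) :
    (g • z).im = z.im / Complex.normSq (g 1 0 * z + g 1 1) := by
  have : (g • z) = ((g : GL (Fin 2) ℝ)) • z := rfl
  rw [this, UpperHalfPlane.im_smul_eq_div_normSq]
  simp [UpperHalfPlane.denom]

/-- **Step 2 of the Key Lemma.** If `p = i·exp(t)` with `t ≥ 0` and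
`dist(p, γ·p) ≤ b` with `b ≥ 0`, then the Busemann cocycle
`B_{γ·∞}(i, γ·i) = −log(Im(γ⁻¹·i))` is at most `b`. -/
theorem busemann_upper_bound (γ : SL(2, ℝ)) (b t : ℝ) (hb : 0 ≤ b) (ht : 0 ≤ t)
    (p : ℍ) (hre : p.re = 0) (him : p.im = Real.exp t)
    (hd : dist p (γ • p) ≤ b) :
    -Real.log ((γ⁻¹ • UpperHalfPlane.I).im) ≤ b := by
  set c : ℝ := γ⁻¹ 1 0 with hc
  set d : ℝ := γ⁻¹ 1 1 with hdd
  have hNI : Complex.normSq ((c:ℂ) * (UpperHalfPlane.I:ℂ) + (d:ℂ)) = c^2 + d^2 := by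
    simp only [UpperHalfPlane.coe_I, Complex.normSq_apply, Complex.add_re, Complex.add_im,
      Complex.mul_re, Complex.mul_im, Complex.ofReal_re, Complex.ofReal_im,
      Complex.I_re, Complex.I_im]
    ring
  have hNp : Complex.normSq ((c:ℂ) * (p:ℂ) + (d:ℂ)) = c^2 * (p.im)^2 + d^2 := by
    simp only [Complex.normSq_apply, Complex.add_re, Complex.add_im,
      Complex.mul_re, Complex.mul_im, Complex.ofReal_re, Complex.ofReal_im,
      UpperHalfPlane.coe_re, UpperHalfPlane.coe_im, hre]
    ring
  have hI : (γ⁻¹ • UpperHalfPlane.I).im = 1 / (c^2 + d^2) := by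
    rw [im_smul_SL', ← hc, ← hdd, hNI, UpperHalfPlane.I_im]
  have hp : (γ⁻¹ • p).im = p.im / (c^2 * (p.im)^2 + d^2) := by
    rw [im_smul_SL', ← hc, ← hdd, hNp]
  have hpos : 0 < c^2 + d^2 := by
    have h0 := (γ⁻¹ • UpperHalfPlane.I).im_pos
    rw [hI] at h0
    exact one_div_pos.mp h0
  have hpim : 1 ≤ p.im := by
    rw [him]; exact Real.one_le_exp ht
  have hsq : 1 ≤ (p.im)^2 := by nlinarith
  have hcc : c^2 ≤ c^2 * (p.im)^2 := by
    calc c^2 = c^2 * 1 := by ring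
      _ ≤ c^2 * (p.im)^2 := mul_le_mul_of_nonneg_left hsq (sq_nonneg c)
  have hpos' : 0 < c^2 * (p.im)^2 + d^2 := by linarith
  have hle : c^2 + d^2 ≤ c^2 * (p.im)^2 + d^2 := by linarith
  -- -log im(γ⁻¹ I) = log (c²+d²)
  have e1 : -Real.log ((γ⁻¹ • UpperHalfPlane.I).im) = Real.log (c^2 + d^2) := by
    rw [hI, Real.log_div one_ne_zero (ne_of_gt hpos), Real.log_one]
    ring
  rw [e1]
  have step1 : Real.log (c^2 + d^2) ≤ Real.log (c^2 * (p.im)^2 + d^2) :=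
    Real.log_le_log hpos hle
  have e2 : Real.log (c^2 * (p.im)^2 + d^2) = Real.log p.im - Real.log ((γ⁻¹ • p).im) := by
    rw [hp, Real.log_div (ne_of_gt p.im_pos) (ne_of_gt hpos')]
    ring
  have step2 : Real.log p.im - Real.log ((γ⁻¹ • p).im) ≤ dist p (γ • p) := by
    have h1 : dist (Real.log ((γ⁻¹ • p).im)) (Real.log p.im) ≤ dist (γ⁻¹ • p) p :=
      UpperHalfPlane.dist_log_im_le _ _
    have h2 : dist (γ⁻¹ • p) p = dist p (γ • p) := by
      rw [← dist_smul γ (γ⁻¹ • p) p, smul_inv_smul, dist_comm]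
    rw [h2] at h1
    calc Real.log p.im - Real.log ((γ⁻¹ • p).im)
        ≤ |Real.log ((γ⁻¹ • p).im) - Real.log p.im| := by
          rw [abs_sub_comm]; exact le_abs_self _
      _ = dist (Real.log ((γ⁻¹ • p).im)) (Real.log p.im) := (Real.dist_eq _ _).symm
      _ ≤ dist p (γ • p) := h1
  linarith
end

section
/- Let (γ_n) be a sequence in SL(2,ℝ) with entries γ_n = [[a_n, b_n], [c_n, d_n]] and let t₀ > 0. Suppose (i) c_n ≠ 0 for all n and |a_n/c_n| → +∞ (the boundary points γ_n·∞ tend to ∞ in ∂ℍ), and (ii) −log(Im(γ_n⁻¹·i)) → t₀. Then there exist real numbers s_n and signs ε_n ∈ {+1, −1} such that ε_n·γ_n·u(s_n) → d(t₀) in SL(2,ℝ). (This is the reduction step of the proof of the Key Lemma: conditions (i) and (ii) force the horocycles γ_n·{Im z = 1} to approach the horocycle {Im z = e^{t₀}}.) -/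
open Matrix Real
open scoped MatrixGroups UpperHalfPlane

set_option synthInstance.maxHeartbeats 1000000 in
private lemma sl_smul_im (g : SL(2,ℝ)) (z : ℍ) :
    (g • z).im = z.im / Complex.normSq (g.1 1 0 * z + g.1 1 1) := by
  have := UpperHalfPlane.im_smul_eq_div_normSq (g : GL(2,ℝ)⁺) z
  simp only [UpperHalfPlane.denom] at this
  rw [show g • z = ((g : GL(2,ℝ)⁺) : GL (Fin 2) ℝ) • z from rfl, this]
  norm_num [Matrix.SpecialLinearGroup.coe_GLPos_coe_GL_coe_matrix, g.2]

private lemma im_inv_smul_I (g : SL(2,ℝ)) :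
    ((g⁻¹ • UpperHalfPlane.I).im) = 1 / ((g.1 0 0)^2 + (g.1 1 0)^2) := by
  rw [sl_smul_im]
  rw [Matrix.SpecialLinearGroup.SL2_inv_expl g]
  simp [UpperHalfPlane.I, UpperHalfPlane.im, Complex.normSq_apply]
  ring_nf

/-- **reduction step of the Key Lemma.** If `γ_n·∞ = a_n/c_n` tends to
infinity in `∂ℍ` and the Busemann cocycles `−log(Im(γ_n⁻¹·i))` converge to `t₀ > 0`, then
there are times `s_n` and signs `ε_n = ±1` with `ε_n·γ_n·u(s_n) → d(t₀)` in `SL(2,ℝ)`. -/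
theorem horocycles_converge (γ : ℕ → SL(2, ℝ)) (t₀ : ℝ) (ht₀ : 0 < t₀)
    (hc : ∀ n, (γ n).1 1 0 ≠ 0)
    (hinfty : Filter.Tendsto (fun n => |(γ n).1 0 0 / (γ n).1 1 0|)
      Filter.atTop Filter.atTop)
    (hbus : Filter.Tendsto (fun n => -Real.log (((γ n)⁻¹ • UpperHalfPlane.I).im))
      Filter.atTop (nhds t₀)) :
    ∃ (s : ℕ → ℝ) (ε : ℕ → SL(2, ℝ)), (∀ n, ε n = 1 ∨ ε n = negOne) ∧
      Filter.Tendsto (fun n => ε n * γ n * uMat (s n)) Filter.atTop (nhds (dMat t₀)) := by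
  set a : ℕ → ℝ := fun n => (γ n).1 0 0 with ha_def
  set b : ℕ → ℝ := fun n => (γ n).1 0 1 with hb_def
  set c : ℕ → ℝ := fun n => (γ n).1 1 0 with hc_def
  set dd : ℕ → ℝ := fun n => (γ n).1 1 1 with hd_def
  have hpos : ∀ n, 0 < a n ^ 2 + c n ^ 2 := by
    intro n
    have : c n ≠ 0 := hc n
    positivity
  -- q n := a n ^ 2 + c n ^ 2 tends to exp t₀
  have hq : Filter.Tendsto (fun n => a n ^ 2 + c n ^ 2) Filter.atTop (nhds (Real.exp t₀)) := by
    have hlog : Filter.Tendsto (fun n => Real.log (a n ^ 2 + c n ^ 2))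
        Filter.atTop (nhds t₀) := by
      refine hbus.congr (fun n => ?_)
      rw [im_inv_smul_I, one_div, Real.log_inv, neg_neg]
    have := (Real.continuous_exp.tendsto t₀).comp hlog
    refine this.congr (fun n => ?_)
    simp [Function.comp, Real.exp_log (hpos n)]
  -- c tends to 0
  have hc0 : Filter.Tendsto c Filter.atTop (nhds 0) := by
    have hbd : ∀ᶠ n in Filter.atTop, a n ^ 2 + c n ^ 2 ≤ Real.exp t₀ + 1 :=
      hq.eventually (eventually_le_nhds (lt_add_one _))
    have hge : ∀ᶠ n in Filter.atTop, (1:ℝ) ≤ |a n / c n| := hinfty.eventually_ge_atTop 1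
    have hg0 : Filter.Tendsto (fun n => (Real.exp t₀ + 1) / |a n / c n|)
        Filter.atTop (nhds 0) := tendsto_const_nhds.div_atTop hinfty
    refine squeeze_zero_norm' ?_ hg0
    filter_upwards [hbd, hge] with n h1 h2
    have hcne : |c n| ≠ 0 := abs_ne_zero.mpr (hc n)
    have habs : |a n / c n| = |a n| / |c n| := abs_div _ _
    have hEpos : (0:ℝ) < Real.exp t₀ + 1 := by positivity
    have haub : |a n| ≤ Real.exp t₀ + 1 := by
      nlinarith [sq_abs (a n), sq_nonneg (c n), abs_nonneg (a n),
        sq_nonneg (|a n| - (Real.exp t₀ + 1)), Real.exp_pos t₀]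
    rw [Real.norm_eq_abs, le_div_iff₀ (lt_of_lt_of_le one_pos h2), habs]
    have heq : |c n| * (|a n| / |c n|) = |a n| := by field_simp
    rw [heq]; exact haub
  -- a² tends to exp t₀, |a| tends to exp (t₀/2)
  have hc20 : Filter.Tendsto (fun n => c n ^ 2) Filter.atTop (nhds 0) := by
    have := hc0.mul hc0
    simpa [sq] using this
  have ha2 : Filter.Tendsto (fun n => a n ^ 2) Filter.atTop (nhds (Real.exp t₀)) := by
    have := hq.sub hc20
    simpa using this.congr (fun n => by ring)
  have habs : Filter.Tendsto (fun n => |a n|) Filter.atTop (nhds (Real.exp (t₀/2))) := by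
    have hsq : Filter.Tendsto (fun n => Real.sqrt (a n ^ 2)) Filter.atTop
        (nhds (Real.sqrt (Real.exp t₀))) := (Real.continuous_sqrt.tendsto _).comp ha2
    have h1 : Real.sqrt (Real.exp t₀) = Real.exp (t₀/2) := by
      rw [show Real.exp t₀ = (Real.exp (t₀/2))^2 by rw [sq, ← Real.exp_add]; ring_nf]
      exact Real.sqrt_sq (Real.exp_pos _).le
    rw [← h1]
    exact hsq.congr (fun n => Real.sqrt_sq_eq_abs _)
  -- eventually a n ≠ 0
  have hane : ∀ᶠ n in Filter.atTop, a n ≠ 0 := by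
    have := habs.eventually (eventually_gt_nhds (Real.exp_pos (t₀/2)))
    filter_upwards [this] with n hn
    intro h; rw [h] at hn; simp at hn
  -- signs and times
  set σ : ℕ → ℝ := fun n => if 0 < a n then 1 else -1 with hσ_def
  set ε : ℕ → SL(2, ℝ) := fun n => if 0 < a n then 1 else negOne with hε_def
  set s : ℕ → ℝ := fun n => if a n = 0 then 0 else -(b n) / a n with hs_def
  have hσa : ∀ n, σ n * a n = |a n| := by
    intro n
    simp only [hσ_def]
    split_ifs with h
    · rw [one_mul, abs_of_pos h]
    · rw [neg_one_mul, abs_of_nonpos (not_lt.mp h)]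
  have hσsq : ∀ n, σ n * σ n = 1 := by
    intro n; simp only [hσ_def]; split_ifs <;> norm_num
  refine ⟨s, ε, ?_, ?_⟩
  · intro n
    simp only [hε_def]
    split_ifs
    · exact Or.inl rfl
    · exact Or.inr rfl
  -- the matrix entries of ε n * γ n * uMat (s n)
  have hM : ∀ n, ((ε n * γ n * uMat (s n) : SL(2,ℝ)) : Matrix (Fin 2) (Fin 2) ℝ) =
      !![σ n * a n, σ n * (a n * s n + b n); σ n * c n, σ n * (c n * s n + dd n)] := by
    intro n
    have hε : ((ε n : SL(2,ℝ)) : Matrix (Fin 2) (Fin 2) ℝ) = !![σ n, 0; 0, σ n] := by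
      simp only [hε_def, hσ_def]
      split_ifs
      · simp [Matrix.one_fin_two]
      · rfl
    have hγm : ((γ n : SL(2,ℝ)) : Matrix (Fin 2) (Fin 2) ℝ) = !![a n, b n; c n, dd n] :=
      Matrix.eta_fin_two _
    have hu : ((uMat (s n) : SL(2,ℝ)) : Matrix (Fin 2) (Fin 2) ℝ) = !![1, s n; 0, 1] := rfl
    rw [Matrix.SpecialLinearGroup.coe_mul, Matrix.SpecialLinearGroup.coe_mul, hε, hγm, hu]
    ext i j
    fin_cases i <;> fin_cases j <;> simp [Matrix.mul_fin_two] <;> ring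
  -- determinant relation
  have hdet : ∀ n, a n * dd n - b n * c n = 1 := by
    intro n
    have := (γ n).2
    rw [Matrix.det_fin_two] at this
    linarith [this]
  -- the four entry limits
  have h00 : Filter.Tendsto (fun n => σ n * a n) Filter.atTop (nhds (Real.exp (t₀/2))) :=
    habs.congr (fun n => (hσa n).symm)
  have h10 : Filter.Tendsto (fun n => σ n * c n) Filter.atTop (nhds 0) := by
    refine squeeze_zero_norm (fun n => ?_) (by simpa using hc0.abs)
    rw [Real.norm_eq_abs, abs_mul]
    simp only [hσ_def]
    split_ifs <;> simp
  have h01 : Filter.Tendsto (fun n => σ n * (a n * s n + b n)) Filter.atTop (nhds 0) := by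
    refine Filter.Tendsto.congr' ?_ tendsto_const_nhds
    filter_upwards [hane] with n hn
    have hz : a n * s n + b n = 0 := by
      simp only [hs_def, if_neg hn]; field_simp; ring
    rw [hz, mul_zero]
  have h11 : Filter.Tendsto (fun n => σ n * (c n * s n + dd n)) Filter.atTop
      (nhds (Real.exp (-(t₀/2)))) := by
    have hinv : Filter.Tendsto (fun n => (σ n * a n)⁻¹) Filter.atTop
        (nhds (Real.exp (t₀/2))⁻¹) := h00.inv₀ (Real.exp_ne_zero _)
    rw [← Real.exp_neg] at hinv
    refine Filter.Tendsto.congr' ?_ hinv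
    filter_upwards [hane] with n hn
    have hcsd : c n * s n + dd n = (a n)⁻¹ := by
      simp only [hs_def, if_neg hn]
      field_simp
      linarith [hdet n]
    rw [mul_inv, hcsd, inv_eq_of_mul_eq_one_right (hσsq n)]
  -- assemble
  rw [nhds_induced, Filter.tendsto_comap_iff]
  have hd : ((dMat t₀ : SL(2,ℝ)) : Matrix (Fin 2) (Fin 2) ℝ) =
      !![Real.exp (t₀/2), 0; 0, Real.exp (-(t₀/2))] := rfl
  rw [hd]
  have hgoal : Filter.Tendsto (fun n =>
      (!![σ n * a n, σ n * (a n * s n + b n); σ n * c n, σ n * (c n * s n + dd n)] :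
        Matrix (Fin 2) (Fin 2) ℝ)) Filter.atTop
      (nhds !![Real.exp (t₀/2), 0; 0, Real.exp (-(t₀/2))]) := by
    refine tendsto_pi_nhds.mpr ?_
    intro i
    rw [tendsto_pi_nhds]
    intro j
    fin_cases i <;> fin_cases j <;> simp only [Matrix.cons_val', Matrix.cons_val_zero,
      Matrix.cons_val_one, Matrix.head_cons, Matrix.head_fin_const, Matrix.empty_val',
      Matrix.cons_val_fin_one, Matrix.of_apply, Fin.isValue]
    · exact h00
    · exact h01
    · exact h10
    · exact h11
  exact hgoal.congr (fun n => (hM n).symm)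
end
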